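/- Let R be a commutative G-graded ring that is graded radically principal, and let I_0 ⊆ I_1 ⊆ ... be an increasing chain of graded ideals. If the union I = ⋃_i I_i satisfies Grad(I) = Grad(⟨c⟩) for a homogeneous c, then Grad(I_j) = Grad(⟨c⟩) for some index j. -/

import Mathlib

open DirectSum

variable {G A : Type*} [AddGroup G] [DecidableEq G] [CommRing A]

def gradedRadical (𝒜 : G → AddSubgroup A) [GradedRing 𝒜] (I : Ideal A) : Set A :=
  {x | ∀ g : G, ∃ n : ℕ, ((DirectSum.decompose 𝒜 x g : A)) ^ n ∈ I}

def IsGradedRadicallyPrincipal (𝒜 : G → AddSubgroup A) [GradedRing 𝒜] (I : Ideal A) : Prop :=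
  ∃ c : A, SetLike.IsHomogeneousElem 𝒜 c ∧ gradedRadical 𝒜 I = gradedRadical 𝒜 (Ideal.span {c})

def GradedRadicallyPrincipalRing (𝒜 : G → AddSubgroup A) [GradedRing 𝒜] : Prop :=
  ∀ I : Ideal A, I.IsHomogeneous 𝒜 → IsGradedRadicallyPrincipal 𝒜 I

def IsGradedPrime (𝒜 : G → AddSubgroup A) [GradedRing 𝒜] (P : Ideal A) : Prop :=
  P ≠ ⊤ ∧ P.IsHomogeneous 𝒜 ∧
    ∀ ⦃x y : A⦄, SetLike.IsHomogeneousElem 𝒜 x → SetLike.IsHomogeneousElem 𝒜 y → x * y ∈ P →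
      x ∈ P ∨ y ∈ P

theorem stmt_8 (𝒜 : G → AddSubgroup A) [GradedRing 𝒜]
    (hR : GradedRadicallyPrincipalRing 𝒜) (I : ℕ → Ideal A)
    (hmono : Monotone I) (hhom : ∀ i, (I i).IsHomogeneous 𝒜)
    (c : A) (hc : SetLike.IsHomogeneousElem 𝒜 c)
    (h : gradedRadical 𝒜 (⨆ i, I i) = gradedRadical 𝒜 (Ideal.span {c})) :
    ∃ j, gradedRadical 𝒜 (I j) = gradedRadical 𝒜 (Ideal.span {c}) := by
  -- c belongs to gradedRadical of span {c}
  obtain ⟨i, hci⟩ := hc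
  have hcg : c ∈ gradedRadical 𝒜 (Ideal.span {c}) := by
    intro g
    refine ⟨1, ?_⟩
    by_cases hg : g = i
    · subst hg
      rw [DirectSum.decompose_of_mem_same 𝒜 hci, pow_one]
      exact Ideal.subset_span rfl
    · rw [DirectSum.decompose_of_mem_ne 𝒜 hci (Ne.symm hg)]
      simp
  have hc2 : c ∈ gradedRadical 𝒜 (⨆ i, I i) := h ▸ hcg
  obtain ⟨n, hn⟩ := hc2 i
  rw [DirectSum.decompose_of_mem_same 𝒜 hci] at hn
  obtain ⟨j, hj⟩ := (Submodule.mem_iSup_of_directed _ hmono.directed_le).1 hn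
  refine ⟨j, Set.Subset.antisymm ?_ ?_⟩
  · rw [← h]
    intro x hx g
    obtain ⟨m, hm⟩ := hx g
    exact ⟨m, Ideal.mem_iSup_of_mem j (by exact_mod_cast hm)⟩
  · intro x hx g
    obtain ⟨m, hm⟩ := hx g
    obtain ⟨a, ha⟩ := Ideal.mem_span_singleton'.1 hm
    refine ⟨m * n, ?_⟩
    rw [pow_mul, ← ha, mul_pow]
    exact Ideal.mul_mem_left _ _ hj
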